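/- arXiv:1905.00463 — 2 statements merged into one kernel-verified Lean document; each statement's English description precedes it below -/
import Mathlib

section
/- Let ρ : Witt_> → Diff(ℂ((z))) be an injective Lie algebra homomorphism, where Witt_> is spanned by {L_i : i ≥ −1} with [L_i,L_j]=(i−j)L_{i+j}, and suppose ρ(L_0) has order 1. Then the sequence of orders n_i = ord(ρ(L_i)) satisfies either n_i = 1 for all i ≥ −1, or n_i = i+1 for all i ≥ −1; in particular n_i + n_j − 1 = n_{i+j} for all i ≠ j ≥ −1. -/
set_option synthInstance.maxHeartbeats 1000000
set_option maxHeartbeats 1000000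

noncomputable section

/-- The derivative `∂ = d/dz` on `ℂ((z))`, as a `ℂ`-linear endomorphism. -/
def Dz : Module.End ℂ (LaurentSeries ℂ) := LaurentSeries.derivative ℂ

/-- Multiplication by a Laurent series `g`, as a `ℂ`-linear endomorphism of `ℂ((z))`. -/
def mz (g : LaurentSeries ℂ) : Module.End ℂ (LaurentSeries ℂ) where
  toFun f := g * f
  map_add' := mul_add g
  map_smul' c f := by
    show g * (c • f) = c • (g * f)
    rw [← HahnSeries.single_zero_mul_eq_smul, ← HahnSeries.single_zero_mul_eq_smul, mul_left_comm]

/-- `P` is a differential operator on `ℂ((z))` of order `≤ k`: `P = Σ_{j=0}^{k} ξ_j ∂^j`. -/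
def DiffOrderLE (P : Module.End ℂ (LaurentSeries ℂ)) (k : ℕ) : Prop :=
  ∃ ξ : ℕ → LaurentSeries ℂ, P = ∑ j ∈ Finset.range (k + 1), mz (ξ j) * Dz ^ j

/-- `P` is a differential operator on `ℂ((z))` of order `< k` (for `k = 0` this means `P = 0`). -/
def DiffOrderLT (P : Module.End ℂ (LaurentSeries ℂ)) (k : ℕ) : Prop :=
  ∃ ξ : ℕ → LaurentSeries ℂ, P = ∑ j ∈ Finset.range k, mz (ξ j) * Dz ^ j

/-- `P` is a differential operator on `ℂ((z))` of order exactly `k`. -/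
def HasOrder (P : Module.End ℂ (LaurentSeries ℂ)) (k : ℕ) : Prop :=
  DiffOrderLE P k ∧ ¬ DiffOrderLT P k

-- ===== infrastructure =====
open Finset

abbrev LS := LaurentSeries ℂ
abbrev dzf (f : LS) : LS := Dz f

lemma dz_coeff (f : LS) (m : ℤ) :
    (dzf f).coeff m = (m+1) • f.coeff (m+1) := by
  rw [dzf, Dz, LaurentSeries.derivative_apply, LaurentSeries.hasseDeriv_coeff]
  simp [Ring.choose_one_right]

lemma dz_leibniz (x y : LS) : dzf (x * y) = x * dzf y + dzf x * y := by
  ext n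
  have hxy : (x * dzf y).coeff n
      = ∑ ij ∈ Finset.antidiagonal x.isPWO_support y.isPWO_support (n+1),
          ij.2 • (x.coeff ij.1 * y.coeff ij.2) := by
    rw [HahnSeries.coeff_mul]
    have step1 : (∑ ij ∈ Finset.antidiagonal x.isPWO_support (dzf y).isPWO_support n,
        x.coeff ij.1 * (dzf y).coeff ij.2)
        = ∑ ij ∈ (Finset.antidiagonal x.isPWO_support y.isPWO_support (n+1)).filter
            (fun ij => ij.2 ≠ 0), ij.2 • (x.coeff ij.1 * y.coeff ij.2) := by
      refine Finset.sum_nbij' (fun ij => (ij.1, ij.2 + 1)) (fun ij => (ij.1, ij.2 - 1))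
        ?_ ?_ ?_ ?_ ?_
      · rintro ⟨i, j⟩ hij
        rw [Finset.mem_antidiagonal] at hij
        obtain ⟨hi, hj, hsum⟩ := hij
        rw [HahnSeries.mem_support, dz_coeff] at hj
        have h1 : (j+1) ≠ 0 ∧ y.coeff (j+1) ≠ 0 := by
          constructor
          · rintro h; rw [h, zero_smul] at hj; exact hj rfl
          · rintro h; rw [h, smul_zero] at hj; exact hj rfl
        rw [Finset.mem_filter, Finset.mem_antidiagonal]
        exact ⟨⟨hi, h1.2, by dsimp only; omega⟩, h1.1⟩
      · rintro ⟨i, j⟩ hij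
        rw [Finset.mem_filter, Finset.mem_antidiagonal] at hij
        obtain ⟨⟨hi, hj, hsum⟩, hne⟩ := hij
        rw [HahnSeries.mem_support] at hi hj
        rw [Finset.mem_antidiagonal]
        refine ⟨hi, ?_, by dsimp only; omega⟩
        rw [HahnSeries.mem_support, dz_coeff, show j - 1 + 1 = j by ring]
        exact smul_ne_zero hne hj
      · rintro ⟨i, j⟩ _; simp
      · rintro ⟨i, j⟩ _; simp
      · rintro ⟨i, j⟩ _
        show x.coeff i * (dzf y).coeff j = (j+1) • (x.coeff i * y.coeff (j+1))
        rw [dz_coeff, mul_smul_comm]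
    rw [step1]
    refine Finset.sum_subset (Finset.filter_subset _ _) fun ij hij hij' => ?_
    rw [Finset.mem_filter, not_and] at hij'
    have : ij.2 = 0 := not_not.mp (hij' hij)
    rw [this, zero_smul]
  have hyx : (dzf x * y).coeff n
      = ∑ ij ∈ Finset.antidiagonal x.isPWO_support y.isPWO_support (n+1),
          ij.1 • (x.coeff ij.1 * y.coeff ij.2) := by
    rw [HahnSeries.coeff_mul]
    have step1 : (∑ ij ∈ Finset.antidiagonal (dzf x).isPWO_support y.isPWO_support n,
        (dzf x).coeff ij.1 * y.coeff ij.2)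
        = ∑ ij ∈ (Finset.antidiagonal x.isPWO_support y.isPWO_support (n+1)).filter
            (fun ij => ij.1 ≠ 0), ij.1 • (x.coeff ij.1 * y.coeff ij.2) := by
      refine Finset.sum_nbij' (fun ij => (ij.1 + 1, ij.2)) (fun ij => (ij.1 - 1, ij.2))
        ?_ ?_ ?_ ?_ ?_
      · rintro ⟨i, j⟩ hij
        rw [Finset.mem_antidiagonal] at hij
        obtain ⟨hi, hj, hsum⟩ := hij
        rw [HahnSeries.mem_support, dz_coeff] at hi
        have h1 : (i+1) ≠ 0 ∧ x.coeff (i+1) ≠ 0 := by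
          constructor
          · rintro h; rw [h, zero_smul] at hi; exact hi rfl
          · rintro h; rw [h, smul_zero] at hi; exact hi rfl
        rw [Finset.mem_filter, Finset.mem_antidiagonal]
        exact ⟨⟨h1.2, hj, by dsimp only; omega⟩, h1.1⟩
      · rintro ⟨i, j⟩ hij
        rw [Finset.mem_filter, Finset.mem_antidiagonal] at hij
        obtain ⟨⟨hi, hj, hsum⟩, hne⟩ := hij
        rw [HahnSeries.mem_support] at hi hj
        rw [Finset.mem_antidiagonal]
        refine ⟨?_, hj, by dsimp only; omega⟩
        rw [HahnSeries.mem_support, dz_coeff, show i - 1 + 1 = i by ring]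
        exact smul_ne_zero hne hi
      · rintro ⟨i, j⟩ _; simp
      · rintro ⟨i, j⟩ _; simp
      · rintro ⟨i, j⟩ _
        show (dzf x).coeff i * y.coeff j = (i+1) • (x.coeff (i+1) * y.coeff j)
        rw [dz_coeff, smul_mul_assoc]
    rw [step1]
    refine Finset.sum_subset (Finset.filter_subset _ _) fun ij hij hij' => ?_
    rw [Finset.mem_filter, not_and] at hij'
    have : ij.1 = 0 := not_not.mp (hij' hij)
    rw [this, zero_smul]
  rw [HahnSeries.coeff_add, hxy, hyx, dz_coeff, HahnSeries.coeff_mul, smul_sum,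
    ← Finset.sum_add_distrib]
  refine Finset.sum_congr rfl fun ij hij => ?_
  rw [Finset.mem_antidiagonal] at hij
  rw [← add_smul, add_comm ij.2 ij.1, hij.2.2]


lemma mz_apply (g f : LS) : mz g f = g * f := rfl

lemma smul_mul_ls (c : ℂ) (a f : LS) : (c • a) * f = c • (a * f) := by
  rw [← HahnSeries.single_zero_mul_eq_smul, ← HahnSeries.single_zero_mul_eq_smul, mul_assoc]

lemma mul_smul_ls (c : ℂ) (a f : LS) : a * (c • f) = c • (a * f) := by
  rw [← HahnSeries.single_zero_mul_eq_smul, ← HahnSeries.single_zero_mul_eq_smul, mul_left_comm]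

instance : IsScalarTower ℂ LS LS :=
  ⟨fun c a f => smul_mul_ls c a f⟩

instance : SMulCommClass ℂ LS LS :=
  ⟨fun c a f => (mul_smul_ls c a f).symm⟩

lemma mz_zero : mz 0 = 0 :=
  LinearMap.ext fun f => zero_mul f

lemma mz_add (a b : LS) : mz (a + b) = mz a + mz b :=
  LinearMap.ext fun f => add_mul a b f

lemma mz_sub (a b : LS) : mz (a - b) = mz a - mz b :=
  LinearMap.ext fun f => sub_mul a b f

lemma mz_mul (a b : LS) : mz (a * b) = mz a * mz b :=
  LinearMap.ext fun f => mul_assoc a b f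

lemma mz_smul (c : ℂ) (a : LS) : mz (c • a) = c • mz a :=
  LinearMap.ext fun f => smul_mul_ls c a f

lemma mz_sum {α : Type*} (s : Finset α) (f : α → LS) :
    mz (∑ x ∈ s, f x) = ∑ x ∈ s, mz (f x) := by
  refine LinearMap.ext fun g => ?_
  show (∑ x ∈ s, f x) * g = _
  rw [Finset.sum_mul]
  simp [LinearMap.sum_apply, mz_apply]

lemma dz_mz (a : LS) : Dz * mz a = mz a * Dz + mz (dzf a) :=
  LinearMap.ext fun f => dz_leibniz a f

lemma lemE (a : ℕ) (η : LS) : ∃ ζ : ℕ → LS,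
    Dz ^ a * mz η = ∑ m ∈ Finset.range (a+1), mz (ζ m) * Dz ^ m ∧
    ζ a = η ∧ ∀ m, m + 1 = a → ζ m = (a : ℂ) • dzf η := by
  induction a with
  | zero =>
    refine ⟨fun _ => η, ?_, rfl, by omega⟩
    simp
  | succ a IH =>
    obtain ⟨ζ, hsum, htop, hsub⟩ := IH
    refine ⟨fun m => (if 1 ≤ m then ζ (m-1) else 0) +
      (if m ≤ a then dzf (ζ m) else 0), ?_, ?_, ?_⟩
    · have h1 : Dz ^ (a+1) * mz η = Dz * (Dz ^ a * mz η) := by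
        rw [pow_succ', mul_assoc]
      rw [h1, hsum, Finset.mul_sum]
      have h2 : ∀ m, Dz * (mz (ζ m) * Dz ^ m)
          = mz (ζ m) * Dz ^ (m+1) + mz (dzf (ζ m)) * Dz ^ m := by
        intro m
        rw [← mul_assoc, dz_mz, add_mul, mul_assoc, ← pow_succ']
      simp only [h2]
      rw [Finset.sum_add_distrib]
      have hsplit : (∑ m ∈ Finset.range (a+1+1),
          mz ((if 1 ≤ m then ζ (m-1) else 0) + (if m ≤ a then dzf (ζ m) else 0)) * Dz ^ m)
          = (∑ m ∈ Finset.range (a+1+1), mz (if 1 ≤ m then ζ (m-1) else 0) * Dz ^ m)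
            + ∑ m ∈ Finset.range (a+1+1), mz (if m ≤ a then dzf (ζ m) else 0) * Dz ^ m := by
        rw [← Finset.sum_add_distrib]
        exact Finset.sum_congr rfl fun m _ => by rw [mz_add, add_mul]
      rw [hsplit]
      have h3 : (∑ m ∈ Finset.range (a+1+1), mz (if 1 ≤ m then ζ (m-1) else 0) * Dz ^ m)
          = ∑ m ∈ Finset.range (a+1), mz (ζ m) * Dz ^ (m+1) := by
        rw [Finset.sum_range_succ']
        rw [if_neg (by omega), mz_zero, zero_mul, add_zero]
        exact Finset.sum_congr rfl fun m _ => by rw [if_pos (by omega), Nat.add_sub_cancel]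
      have h4 : (∑ m ∈ Finset.range (a+1+1), mz (if m ≤ a then dzf (ζ m) else 0) * Dz ^ m)
          = ∑ m ∈ Finset.range (a+1), mz (dzf (ζ m)) * Dz ^ m := by
        rw [Finset.sum_range_succ, if_neg (by omega), mz_zero, zero_mul, add_zero]
        refine Finset.sum_congr rfl fun m hm => ?_
        rw [Finset.mem_range] at hm
        rw [if_pos (by omega)]
      rw [h3, h4]
    · show (if 1 ≤ a + 1 then ζ (a+1-1) else 0) + (if a + 1 ≤ a then dzf (ζ (a+1)) else 0) = η
      rw [if_pos (by omega), if_neg (by omega), add_zero, Nat.add_sub_cancel, htop]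
    · intro m hm
      have hma : m = a := by omega
      subst hma
      show (if 1 ≤ m then ζ (m-1) else 0) + (if m ≤ m then dzf (ζ m) else 0)
        = ((m+1 : ℕ) : ℂ) • dzf η
      rw [if_pos le_rfl]
      rcases Nat.eq_zero_or_pos m with h0 | h1
      · subst h0
        rw [if_neg (by omega), zero_add, htop]
        norm_num
      · rw [if_pos (show (1:ℕ) ≤ m by omega), hsub (m-1) (by omega), htop]
        have := add_smul (m:ℂ) 1 (dzf η)
        rw [one_smul] at this
        push_cast
        rw [this]

lemma lemF (a b : ℕ) (ξ η : LS) : ∃ ζ : ℕ → LS,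
    (mz ξ * Dz ^ a) * (mz η * Dz ^ b) = ∑ m ∈ Finset.range (a+b+1), mz (ζ m) * Dz ^ m ∧
    ζ (a+b) = ξ * η ∧ ∀ m, m + 1 = a + b → ζ m = (a : ℂ) • (ξ * dzf η) := by
  obtain ⟨ζE, hE, hEtop, hEsub⟩ := lemE a η
  refine ⟨fun m => if b ≤ m ∧ m ≤ a + b then ξ * ζE (m - b) else 0, ?_, ?_, ?_⟩
  · have h1 : (mz ξ * Dz ^ a) * (mz η * Dz ^ b) = mz ξ * (Dz ^ a * mz η) * Dz ^ b := by
      simp only [mul_assoc]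
    rw [h1, hE, Finset.mul_sum, Finset.sum_mul]
    have h2 : ∀ m, mz ξ * (mz (ζE m) * Dz ^ m) * Dz ^ b
        = mz (ξ * ζE m) * Dz ^ (m + b) := by
      intro m
      rw [mz_mul, pow_add]
      simp only [mul_assoc]
    simp only [h2]
    have h3 : (∑ m ∈ Finset.Ico 0 b,
        mz (if b ≤ m ∧ m ≤ a + b then ξ * ζE (m - b) else 0) * Dz ^ m) = 0 := by
      refine Finset.sum_eq_zero fun m hm => ?_
      rw [Finset.mem_Ico] at hm
      rw [if_neg (by omega), mz_zero, zero_mul]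
    have hR : (∑ m ∈ Finset.range (a+b+1),
        mz (if b ≤ m ∧ m ≤ a + b then ξ * ζE (m - b) else 0) * Dz ^ m)
        = ∑ m ∈ Finset.Ico b (a+b+1),
            mz (if b ≤ m ∧ m ≤ a + b then ξ * ζE (m - b) else 0) * Dz ^ m := by
      rw [Finset.range_eq_Ico,
        ← Finset.sum_Ico_consecutive _ (Nat.zero_le b) (by omega : b ≤ a+b+1), h3, zero_add]
    rw [hR]
    have h5 : (∑ m ∈ Finset.Ico b (a+b+1),
        mz (if b ≤ m ∧ m ≤ a + b then ξ * ζE (m - b) else 0) * Dz ^ m)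
        = ∑ m ∈ Finset.range (a+1),
            mz (if b ≤ b+m ∧ b+m ≤ a + b then ξ * ζE (b+m - b) else 0) * Dz ^ (b+m) :=
      (Finset.sum_Ico_eq_sum_range _ _ _).trans (by rw [show a+b+1-b = a+1 from by omega])
    rw [h5]
    refine Finset.sum_congr rfl fun m hm => ?_
    rw [Finset.mem_range] at hm
    rw [if_pos (by omega), show b + m - b = m from by omega, show b + m = m + b from by omega]
  · show (if b ≤ a+b ∧ a+b ≤ a + b then ξ * ζE (a+b - b) else 0) = ξ * η
    rw [if_pos (by omega), Nat.add_sub_cancel, hEtop]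
  · intro m hm
    show (if b ≤ m ∧ m ≤ a + b then ξ * ζE (m - b) else 0) = (a : ℂ) • (ξ * dzf η)
    rcases Nat.eq_zero_or_pos a with h0 | hpos
    · subst h0
      rw [if_neg (by omega)]
      rw [show ((0:ℕ):ℂ) = 0 from Nat.cast_zero]
      exact (zero_smul ℂ (ξ * dzf η)).symm
    · rw [if_pos (by omega), hEsub (m - b) (by omega)]
      rw [mul_smul_comm]

lemma lemG (a b : ℕ) (ξ η : LS) : ∃ ζ : ℕ → LS,
    ⁅mz ξ * Dz ^ a, mz η * Dz ^ b⁆ = ∑ m ∈ Finset.range (a+b), mz (ζ m) * Dz ^ m ∧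
    ∀ m, m + 1 = a + b → ζ m = (a : ℂ) • (ξ * dzf η) - (b : ℂ) • (η * dzf ξ) := by
  obtain ⟨ζ₁, h₁, h₁top, h₁sub⟩ := lemF a b ξ η
  obtain ⟨ζ₂, h₂, h₂top, h₂sub⟩ := lemF b a η ξ
  refine ⟨fun m => ζ₁ m - ζ₂ m, ?_, ?_⟩
  · rw [LieRing.of_associative_ring_bracket, h₁, h₂, show b + a = a + b by omega]
    have hd := Finset.sum_sub_distrib (s := Finset.range (a+b+1))
      (f := fun m => mz (ζ₁ m) * Dz ^ m) (g := fun m => mz (ζ₂ m) * Dz ^ m)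
    rw [← hd]
    have h5 : ∀ m, mz (ζ₁ m) * Dz ^ m - mz (ζ₂ m) * Dz ^ m
        = mz (ζ₁ m - ζ₂ m) * Dz ^ m := fun m => by
      rw [mz_sub]
      exact (sub_mul (mz (ζ₁ m)) (mz (ζ₂ m)) (Dz ^ m)).symm
    simp only [h5]
    rw [Finset.sum_range_succ]
    have h6 : ζ₁ (a+b) - ζ₂ (a+b) = 0 := by
      rw [h₁top, show a + b = b + a from by omega, h₂top, mul_comm, sub_self]
    rw [h6, mz_zero, zero_mul, add_zero]
  · intro m hm
    show ζ₁ m - ζ₂ m = _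
    rw [h₁sub m hm, h₂sub m (by omega)]

lemma lemH (p q : ℕ) (ξ η : ℕ → LS) : ∃ ζ : ℕ → LS,
    ⁅∑ j ∈ Finset.range (p+1), mz (ξ j) * Dz ^ j,
      ∑ k ∈ Finset.range (q+1), mz (η k) * Dz ^ k⁆
      = ∑ m ∈ Finset.range (p+q), mz (ζ m) * Dz ^ m ∧
    ∀ m, m + 1 = p + q →
      ζ m = (p : ℂ) • (ξ p * dzf (η q)) - (q : ℂ) • (η q * dzf (ξ p)) := by
  have H : ∀ j k : ℕ, ∃ ζ : ℕ → LS,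
      ⁅mz (ξ j) * Dz ^ j, mz (η k) * Dz ^ k⁆ = ∑ m ∈ Finset.range (j+k), mz (ζ m) * Dz ^ m ∧
      ∀ m, m + 1 = j + k → ζ m = (j : ℂ) • (ξ j * dzf (η k)) - (k : ℂ) • (η k * dzf (ξ j)) :=
    fun j k => lemG j k (ξ j) (η k)
  choose Z h1 h2 using H
  set ζ' : ℕ → ℕ → ℕ → LS := fun j k m => if m < j + k then Z j k m else 0 with hζ'
  refine ⟨fun m => ∑ j ∈ Finset.range (p+1), ∑ k ∈ Finset.range (q+1), ζ' j k m, ?_, ?_⟩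
  · have hpad : ∀ j ∈ Finset.range (p+1), ∀ k ∈ Finset.range (q+1),
        ⁅mz (ξ j) * Dz ^ j, mz (η k) * Dz ^ k⁆
          = ∑ m ∈ Finset.range (p+q), mz (ζ' j k m) * Dz ^ m := by
      intro j hj k hk
      rw [Finset.mem_range] at hj hk
      rw [h1]
      have hsub : Finset.range (j+k) ⊆ Finset.range (p+q) :=
        Finset.range_subset_range.mpr (by omega)
      have hcongr : (∑ m ∈ Finset.range (j+k), mz (Z j k m) * Dz ^ m)
          = ∑ m ∈ Finset.range (j+k), mz (ζ' j k m) * Dz ^ m := by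
        refine Finset.sum_congr rfl fun m hm => ?_
        rw [Finset.mem_range] at hm
        rw [hζ']
        simp only [if_pos hm]
      rw [hcongr]
      refine Finset.sum_subset hsub fun m hm hm' => ?_
      rw [Finset.mem_range] at hm
      rw [Finset.mem_range, not_lt] at hm'
      rw [hζ']
      simp only [if_neg (by omega : ¬ m < j + k), mz_zero, zero_mul]
    set A : ℕ → Module.End ℂ (LaurentSeries ℂ) := fun j => mz (ξ j) * Dz ^ j with hA
    set B : ℕ → Module.End ℂ (LaurentSeries ℂ) := fun k => mz (η k) * Dz ^ k with hB
    have hbil : ⁅∑ j ∈ Finset.range (p+1), A j, ∑ k ∈ Finset.range (q+1), B k⁆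
        = ∑ j ∈ Finset.range (p+1), ∑ k ∈ Finset.range (q+1), ⁅A j, B k⁆ := by
      rw [LieRing.of_associative_ring_bracket]
      have hAB := Finset.sum_mul_sum (Finset.range (p+1)) (Finset.range (q+1)) A B
      have hBA := Finset.sum_mul_sum (Finset.range (q+1)) (Finset.range (p+1)) B A
      rw [hAB, hBA, Finset.sum_comm (s := Finset.range (q+1)) (t := Finset.range (p+1))
        (f := fun k j => B k * A j)]
      have hd := Finset.sum_sub_distrib (s := Finset.range (p+1))
        (f := fun j => ∑ k ∈ Finset.range (q+1), A j * B k)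
        (g := fun j => ∑ k ∈ Finset.range (q+1), B k * A j)
      rw [← hd]
      refine Finset.sum_congr rfl fun j _ => ?_
      have hd2 := Finset.sum_sub_distrib (s := Finset.range (q+1))
        (f := fun k => A j * B k) (g := fun k => B k * A j)
      rw [← hd2]
      exact Finset.sum_congr rfl fun k _ => (LieRing.of_associative_ring_bracket (A j) (B k)).symm
    rw [hbil, Finset.sum_congr rfl (fun j hj => Finset.sum_congr rfl (hpad j hj))]
    symm
    have e1 : ∀ m, mz (∑ j ∈ Finset.range (p+1), ∑ k ∈ Finset.range (q+1), ζ' j k m) * Dz ^ m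
        = ∑ j ∈ Finset.range (p+1), ∑ k ∈ Finset.range (q+1), mz (ζ' j k m) * Dz ^ m := by
      intro m
      rw [mz_sum, Finset.sum_mul]
      refine Finset.sum_congr rfl fun j _ => ?_
      rw [mz_sum, Finset.sum_mul]
    simp only [e1]
    rw [Finset.sum_comm]
    refine Finset.sum_congr rfl fun j _ => ?_
    exact Finset.sum_comm
  · intro m hm
    show (∑ j ∈ Finset.range (p+1), ∑ k ∈ Finset.range (q+1), ζ' j k m) = _
    rw [Finset.sum_eq_single p]
    · rw [Finset.sum_eq_single q]
      · rw [hζ']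
        simp only [if_pos (by omega : m < p + q)]
        exact h2 p q m hm
      · intro k hk hkq
        rw [Finset.mem_range] at hk
        rw [hζ']
        simp only [if_neg (by omega : ¬ m < p + k)]
      · intro h
        exact absurd (Finset.self_mem_range_succ q) h
    · intro j hj hjp
      rw [Finset.mem_range] at hj
      refine Finset.sum_eq_zero fun k hk => ?_
      rw [Finset.mem_range] at hk
      rw [hζ']
      simp only [if_neg (by omega : ¬ m < j + k)]
    · intro h
      exact absurd (Finset.self_mem_range_succ p) h

lemma dz_single (m : ℤ) :
    dzf (HahnSeries.single m (1:ℂ)) = (m:ℂ) • HahnSeries.single (m-1) (1:ℂ) := by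
  ext n
  rw [dz_coeff, HahnSeries.coeff_smul]
  by_cases h : n = m - 1
  · subst h
    rw [show m - 1 + 1 = m from by ring]
    rw [HahnSeries.coeff_single_same, HahnSeries.coeff_single_same]
    simp [zsmul_eq_mul]
  · rw [HahnSeries.coeff_single_of_ne (by omega : n + 1 ≠ m),
      HahnSeries.coeff_single_of_ne h]
    rw [smul_zero, smul_zero]

lemma dz_pow_single (t : ℕ) (m : ℤ) :
    (Dz ^ t) (HahnSeries.single m (1:ℂ))
      = (∏ s ∈ Finset.range t, ((m:ℂ) - s)) • HahnSeries.single (m - t) (1:ℂ) := by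
  induction t with
  | zero => simp
  | succ t IH =>
    rw [pow_succ', Module.End.mul_apply, IH, map_smul]
    have h1 : Dz (HahnSeries.single (m - t) (1:ℂ))
        = ((m:ℂ) - t) • HahnSeries.single (m - t - 1) (1:ℂ) := by
      have := dz_single (m - t)
      rw [dzf] at this
      rw [this]
      push_cast
      ring_nf
    rw [h1, smul_smul, Finset.prod_range_succ]
    rw [show m - t - 1 = m - (t+1 : ℕ) from by push_cast; ring]

lemma ls_smul_eq_zero_iff (c : ℂ) (x : LS) : c • x = 0 ↔ c = 0 ∨ x = 0 := by
  constructor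
  · intro h
    by_cases hc : c = 0
    · exact Or.inl hc
    · refine Or.inr ?_
      ext n
      have h2 := congrArg (fun y : LS => y.coeff n) h
      simp only [HahnSeries.coeff_smul, HahnSeries.coeff_zero, smul_eq_mul] at h2
      rcases mul_eq_zero.mp h2 with h3 | h3
      · exact absurd h3 hc
      · exact h3
  · rintro (h | h) <;> subst h
    · exact zero_smul ℂ x
    · exact smul_zero c

lemma ls_zero_smul (x : LS) : (0:ℂ) • x = 0 := zero_smul ℂ x

lemma uniq (N : ℕ) (ξ : ℕ → LS)
    (h : ∑ j ∈ Finset.range N, mz (ξ j) * Dz ^ j = 0) :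
    ∀ j, j < N → ξ j = 0 := by
  intro j
  induction j using Nat.strong_induction_on with
  | _ j IH =>
    intro hjN
    have happ := LinearMap.congr_fun h (HahnSeries.single (j:ℤ) (1:ℂ))
    rw [LinearMap.sum_apply, LinearMap.zero_apply] at happ
    have hterm : ∀ t ∈ Finset.range N, t ≠ j →
        (mz (ξ t) * Dz ^ t) (HahnSeries.single (j:ℤ) (1:ℂ)) = 0 := by
      intro t ht htj
      rw [Finset.mem_range] at ht
      rw [Module.End.mul_apply, dz_pow_single, mz_apply]
      rcases Nat.lt_or_ge j t with hlt | hge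
      · rw [Finset.prod_eq_zero (Finset.mem_range.mpr hlt)
          (show (((j:ℤ):ℂ) - ((j:ℕ):ℂ)) = 0 from by push_cast; ring),
          ls_zero_smul, mul_zero]
      · have hne : t < j := by omega
        rw [IH t hne (by omega), zero_mul]
    have hj : (mz (ξ j) * Dz ^ j) (HahnSeries.single (j:ℤ) (1:ℂ)) = 0 := by
      rw [← Finset.sum_eq_single_of_mem j (Finset.mem_range.mpr hjN) hterm]
      exact happ
    rw [Module.End.mul_apply, dz_pow_single, mz_apply,
      show ((j:ℤ) - (j:ℕ)) = 0 from by push_cast; ring,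
      HahnSeries.single_zero_one, mul_smul_ls, mul_one] at hj
    have hprod : (∏ s ∈ Finset.range j, (((j:ℤ):ℂ) - (s:ℕ))) ≠ 0 := by
      refine Finset.prod_ne_zero_iff.mpr fun s hs => ?_
      rw [Finset.mem_range] at hs
      intro hzero
      have he : ((j:ℤ):ℂ) = ((s:ℕ):ℂ) := by linear_combination hzero
      have hjs : (j:ℕ) = s := by exact_mod_cast he
      omega
    rcases (ls_smul_eq_zero_iff _ _).mp hj with h1 | h2
    · exact absurd h1 hprod
    · exact h2

lemma pad (N M : ℕ) (h : N ≤ M) (ξ : ℕ → LS) :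
    ∑ j ∈ Finset.range N, mz (ξ j) * Dz ^ j
      = ∑ j ∈ Finset.range M, mz (if j < N then ξ j else 0) * Dz ^ j := by
  have hcongr : (∑ j ∈ Finset.range N, mz (ξ j) * Dz ^ j)
      = ∑ j ∈ Finset.range N, mz (if j < N then ξ j else 0) * Dz ^ j := by
    refine Finset.sum_congr rfl fun j hj => ?_
    rw [Finset.mem_range] at hj
    rw [if_pos hj]
  rw [hcongr]
  refine Finset.sum_subset (Finset.range_subset_range.mpr h) fun j hj hj' => ?_
  rw [Finset.mem_range, not_lt] at hj'
  rw [if_neg (by omega), mz_zero, zero_mul]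

lemma uniq' (N : ℕ) (ξ η : ℕ → LS)
    (h : ∑ j ∈ Finset.range N, mz (ξ j) * Dz ^ j
       = ∑ j ∈ Finset.range N, mz (η j) * Dz ^ j) :
    ∀ j, j < N → ξ j = η j := by
  intro j hj
  have hd : ∑ j ∈ Finset.range N, mz (ξ j - η j) * Dz ^ j = 0 := by
    have h5 : ∀ j, mz (ξ j - η j) * Dz ^ j
        = mz (ξ j) * Dz ^ j - mz (η j) * Dz ^ j := fun j => by
      rw [mz_sub]
      exact sub_mul (mz (ξ j)) (mz (η j)) (Dz ^ j)
    simp only [h5]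
    have hd2 := Finset.sum_sub_distrib (s := Finset.range N)
      (f := fun j => mz (ξ j) * Dz ^ j) (g := fun j => mz (η j) * Dz ^ j)
    rw [hd2, h, sub_self]
  have := uniq N (fun j => ξ j - η j) hd j hj
  exact sub_eq_zero.mp this

def CC (c : ℂ) : LS := HahnSeries.single 0 c

lemma CC_smul (c : ℂ) (x : LS) : c • x = CC c * x :=
  (HahnSeries.single_zero_mul_eq_smul).symm

lemma CC_mul (a b : ℂ) : CC a * CC b = CC (a * b) := by
  rw [CC, CC, CC, HahnSeries.single_mul_single, zero_add]

lemma CC_sub (a b : ℂ) : CC (a - b) = CC a - CC b := by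
  ext n; by_cases h : n = 0 <;> simp [CC, HahnSeries.coeff_single, h]

lemma CC_neg (a : ℂ) : CC (-a) = - CC a := by
  ext n; by_cases h : n = 0 <;> simp [CC, HahnSeries.coeff_single, h]


/-- Let `ρ : Witt_> → Diff(ℂ((z)))` be an injective Lie algebra homomorphism
(`Witt_>` is spanned by `{L i : i ≥ −1}` with `[L i, L j] = (i−j) L (i+j)`), and suppose
`ρ(L 0)` has order `1`.  Then the orders `n i = ord(ρ(L i))` satisfy either `n i = 1` for all
`i ≥ −1` or `n i = i + 1` for all `i ≥ −1`; in particular `n i + n j − 1 = n (i+j)` for all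
distinct `i, j ≥ −1`. -/
theorem orders_of_witt_gt_representation
    (ρ : ℤ → Module.End ℂ (LaurentSeries ℂ))
    (hdiff : ∀ i : ℤ, -1 ≤ i → ∃ k : ℕ, DiffOrderLE (ρ i) k)
    (hrel : ∀ i j : ℤ, -1 ≤ i → -1 ≤ j →
      ⁅ρ i, ρ j⁆ = (((i : ℂ) - (j : ℂ))) • ρ (i + j))
    (hinj : ∀ c : ℤ →₀ ℂ, (∀ i ∈ c.support, (-1 : ℤ) ≤ i) →
      (c.sum fun i a => a • ρ i) = 0 → c = 0)
    (h0 : HasOrder (ρ 0) 1) :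
    ∃ n : ℤ → ℕ,
      (∀ i : ℤ, -1 ≤ i → HasOrder (ρ i) (n i)) ∧
      ((∀ i : ℤ, -1 ≤ i → n i = 1) ∨ (∀ i : ℤ, -1 ≤ i → (n i : ℤ) = i + 1)) ∧
      (∀ i j : ℤ, -1 ≤ i → -1 ≤ j → i ≠ j →
        (n i : ℤ) + (n j : ℤ) - 1 = (n (i + j) : ℤ)) := by
  classical
  -- ρ i ≠ 0 for i ≥ -1
  have hne : ∀ i : ℤ, -1 ≤ i → ρ i ≠ 0 := by
    intro i hi hzero
    have hsupp : ∀ t ∈ (Finsupp.single i (1:ℂ)).support, (-1:ℤ) ≤ t := by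
      intro t ht
      have h2 := Finsupp.support_single_subset ht
      rw [Finset.mem_singleton] at h2
      subst h2; exact hi
    have hsum : ((Finsupp.single i (1:ℂ)).sum fun t a => a • ρ t) = 0 := by
      rw [Finsupp.sum_single_index (by rw [zero_smul])]
      rw [one_smul, hzero]
    have h1 := hinj _ hsupp hsum
    exact one_ne_zero (Finsupp.single_eq_zero.mp h1)
  -- the order function
  set n : ℤ → ℕ := fun i => if h : ∃ k, DiffOrderLE (ρ i) k then Nat.find h else 0 with hn
  have hLE : ∀ i : ℤ, -1 ≤ i → DiffOrderLE (ρ i) (n i) := by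
    intro i hi
    have h := hdiff i hi
    simp only [hn, dif_pos h]
    exact Nat.find_spec h
  have hmin : ∀ i : ℤ, -1 ≤ i → ∀ k, DiffOrderLE (ρ i) k → n i ≤ k := by
    intro i hi k hk
    have h := hdiff i hi
    simp only [hn, dif_pos h]
    exact Nat.find_le hk
  have hord : ∀ i : ℤ, -1 ≤ i → HasOrder (ρ i) (n i) := by
    intro i hi
    refine ⟨hLE i hi, ?_⟩
    intro hLT
    obtain ⟨ξ, hξ⟩ := hLT
    rcases Nat.eq_zero_or_pos (n i) with hz | hpos
    · rw [hz, Finset.range_zero, Finset.sum_empty] at hξ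
      exact hne i hi hξ
    · have hle2 : DiffOrderLE (ρ i) (n i - 1) :=
        ⟨ξ, by rw [show n i - 1 + 1 = n i from by omega]; exact hξ⟩
      have := hmin i hi _ hle2
      omega
  -- n 0 = 1
  have hn0 : n 0 = 1 := by
    rcases lt_trichotomy (n 0) 1 with h | h | h
    · exfalso
      obtain ⟨ξ, hξ⟩ := hLE 0 (by norm_num)
      exact h0.2 ⟨ξ, by rw [show (1:ℕ) = n 0 + 1 from by omega]; exact hξ⟩
    · exact h
    · exfalso
      have := hmin 0 (by norm_num) 1 h0.1
      omega
  -- minimal representations with nonzero top coefficient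
  have hrep : ∀ i : ℤ, ∃ ξ : ℕ → LS, -1 ≤ i →
      (ρ i = ∑ j ∈ Finset.range (n i + 1), mz (ξ j) * Dz ^ j ∧ ξ (n i) ≠ 0) := by
    intro i
    by_cases hi : -1 ≤ i
    · obtain ⟨ξ, hξ⟩ := hLE i hi
      refine ⟨ξ, fun _ => ⟨hξ, ?_⟩⟩
      intro htop
      rw [Finset.sum_range_succ, htop, mz_zero, zero_mul, add_zero] at hξ
      rcases Nat.eq_zero_or_pos (n i) with hz | hpos
      · rw [hz, Finset.range_zero, Finset.sum_empty] at hξ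
        exact hne i hi hξ
      · have hle2 : DiffOrderLE (ρ i) (n i - 1) :=
          ⟨ξ, by rw [show n i - 1 + 1 = n i from by omega]; exact hξ⟩
        have := hmin i hi _ hle2
        omega
    · exact ⟨0, fun h => absurd h hi⟩
  choose σ hσ using hrep
  -- the ODE for top symbols
  have hODE : ∀ i : ℤ, -1 ≤ i →
      σ 0 1 * dzf (σ i (n i))
        = CC ((n i : ℕ) : ℂ) * (σ i (n i) * dzf (σ 0 1)) - CC ((i : ℤ) : ℂ) * σ i (n i) := by
    intro i hi
    obtain ⟨hρi, hσi⟩ := hσ i hi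
    obtain ⟨hρ0, hσ0⟩ := hσ 0 (by norm_num)
    obtain ⟨ζ, hζ, hζtop⟩ := lemH (n 0) (n i) (σ 0) (σ i)
    rw [← hρ0, ← hρi] at hζ
    have hb := (hζ.symm).trans (hrel 0 i (by norm_num) hi)
    rw [zero_add] at hb
    have hsm : (((0:ℤ):ℂ) - ((i:ℤ):ℂ)) • ρ i
        = ∑ m ∈ Finset.range (n i + 1),
            mz ((((0:ℤ):ℂ) - ((i:ℤ):ℂ)) • σ i m) * Dz ^ m := by
      rw [hρi, Finset.smul_sum]
      refine Finset.sum_congr rfl fun m _ => ?_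
      rw [mz_smul]
      exact (smul_mul_assoc _ _ _).symm
    rw [hsm, show n 0 + n i = n i + 1 from by omega] at hb
    have hco := uniq' (n i + 1) ζ _ hb (n i) (by omega)
    rw [hζtop (n i) (by omega)] at hco
    rw [hn0] at hco
    -- hco : ((1:ℕ):ℂ) • (σ 0 1 * dzf (σ i (n i))) - ((n i:ℕ):ℂ) • (σ i (n i) * dzf (σ 0 1))
    --        = (((0:ℤ):ℂ) - ((i:ℤ):ℂ)) • σ i (n i)
    rw [Nat.cast_one, one_smul, CC_smul, CC_smul] at hco
    rw [show CC (((0:ℤ):ℂ) - ((i:ℤ):ℂ)) = - CC ((i:ℤ):ℂ) from by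
      rw [show (((0:ℤ):ℂ) - ((i:ℤ):ℂ)) = -((i:ℤ):ℂ) from by ring, CC_neg]] at hco
    linear_combination hco
  -- the key pair estimates
  have hP : ∀ i j : ℤ, -1 ≤ i → -1 ≤ j → i ≠ j →
      ((n (i+j) : ℤ) + 1 ≤ (n i : ℤ) + (n j : ℤ)) ∧
      (((n (i+j) : ℤ) = (n i : ℤ) + (n j : ℤ) - 1) ∨
        ((n i : ℤ) * j = (n j : ℤ) * i)) := by
    intro i j hi hj hij
    have hij' : (-1:ℤ) ≤ i + j := by omega
    obtain ⟨hρi, hσi⟩ := hσ i hi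
    obtain ⟨hρj, hσj⟩ := hσ j hj
    obtain ⟨hρij, hσij⟩ := hσ (i+j) hij'
    obtain ⟨ζ, hζ, hζtop⟩ := lemH (n i) (n j) (σ i) (σ j)
    rw [← hρi, ← hρj] at hζ
    have hb := (hζ.symm).trans (hrel i j hi hj)
    have hc : ((i:ℂ) - (j:ℂ)) ≠ 0 := by
      intro h
      have h2 : (i:ℂ) = (j:ℂ) := by linear_combination h
      exact hij (by exact_mod_cast h2)
    have hpos : 1 ≤ n i + n j := by
      by_contra hcon
      rw [show n i + n j = 0 from by omega, Finset.range_zero, Finset.sum_empty] at hb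
      have h5 : ((i:ℂ)-(j:ℂ))⁻¹ • (((i:ℂ)-(j:ℂ)) • ρ (i+j)) = 0 := by
        rw [← hb]; exact smul_zero _
      rw [smul_smul, inv_mul_cancel₀ hc, one_smul] at h5
      exact hne (i+j) hij' h5
    have hle : DiffOrderLE (ρ (i+j)) (n i + n j - 1) := by
      refine ⟨fun m => ((i:ℂ) - (j:ℂ))⁻¹ • ζ m, ?_⟩
      rw [show n i + n j - 1 + 1 = n i + n j from by omega]
      have h5 : ((i:ℂ)-(j:ℂ))⁻¹ • (((i:ℂ)-(j:ℂ)) • ρ (i+j))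
          = ((i:ℂ)-(j:ℂ))⁻¹ • ∑ m ∈ Finset.range (n i + n j), mz (ζ m) * Dz ^ m := by
        rw [← hb]
      rw [smul_smul, inv_mul_cancel₀ hc, one_smul, Finset.smul_sum] at h5
      rw [h5]
      refine Finset.sum_congr rfl fun m _ => ?_
      rw [mz_smul]
      exact (smul_mul_assoc _ _ _).symm
    have hmin1 := hmin (i+j) hij' _ hle
    refine ⟨by omega, ?_⟩
    by_cases hcase : n (i+j) = n i + n j - 1
    · left; omega
    · right
      have hpad1 := pad (n (i+j) + 1) (n i + n j) (by omega) (σ (i+j))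
      have hb2 : (∑ m ∈ Finset.range (n i + n j), mz (ζ m) * Dz ^ m)
          = ∑ m ∈ Finset.range (n i + n j),
              mz (((i:ℂ) - (j:ℂ)) • (if m < n (i+j) + 1 then σ (i+j) m else 0)) * Dz ^ m := by
        rw [hb, hρij, hpad1, Finset.smul_sum]
        refine Finset.sum_congr rfl fun m _ => ?_
        rw [mz_smul]
        exact (smul_mul_assoc _ _ _).symm
      have hco := uniq' (n i + n j) _ _ hb2 (n i + n j - 1) (by omega)
      rw [hζtop (n i + n j - 1) (by omega)] at hco
      rw [if_neg (by omega), smul_zero] at hco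
      -- hco : (n i:ℂ) • (σi * dz σj) - (n j:ℂ) • (σj * dz σi) = 0
      have hoi := hODE i hi
      have hoj := hODE j hj
      rw [CC_smul, CC_smul] at hco
      have hkey : ((((n j : ℕ):ℂ)) * ((i:ℤ):ℂ) - (((n i : ℕ):ℂ)) * ((j:ℤ):ℂ))
          • (σ i (n i) * σ j (n j)) = 0 := by
        rw [CC_smul,
          show CC ((((n j : ℕ):ℂ)) * ((i:ℤ):ℂ) - (((n i : ℕ):ℂ)) * ((j:ℤ):ℂ))
            = CC ((n j : ℕ):ℂ) * CC ((i:ℤ):ℂ) - CC ((n i : ℕ):ℂ) * CC ((j:ℤ):ℂ) from by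
              rw [CC_sub, CC_mul, CC_mul]]
        linear_combination (σ 0 1) * hco + (CC ((n j : ℕ):ℂ) * σ j (n j)) * hoi
          - (CC ((n i : ℕ):ℂ) * σ i (n i)) * hoj
      rcases (ls_smul_eq_zero_iff _ _).mp hkey with h1 | h1
      · have h2 : ((n j : ℕ):ℂ) * ((i:ℤ):ℂ) = ((n i : ℕ):ℂ) * ((j:ℤ):ℂ) := by
          linear_combination h1
        have h3 : ((n j : ℕ):ℤ) * i = ((n i : ℕ):ℤ) * j := by exact_mod_cast h2
        omega
      · exact absurd h1 (mul_ne_zero hσi hσj)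
  -- abbreviations for the pair dichotomy
  have hP2 : ∀ i j k : ℤ, i + j = k → -1 ≤ i → -1 ≤ j → i ≠ j →
      ((n k : ℤ) = (n i : ℤ) + (n j : ℤ) - 1 ∨ (n i : ℤ) * j = (n j : ℤ) * i) := by
    intro i j k hk hi hj hij
    have h := (hP i j hi hj hij).2
    rw [hk] at h
    exact h
  have hP1 : ∀ i j k : ℤ, i + j = k → -1 ≤ i → -1 ≤ j → i ≠ j →
      ((n k : ℤ) + 1 ≤ (n i : ℤ) + (n j : ℤ)) := by
    intro i j k hk hi hj hij
    have h := (hP i j hi hj hij).1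
    rw [hk] at h
    exact h
  -- a + b = 2 where a = n 1, b = n (-1)
  have hab : (n 1 : ℤ) + (n (-1) : ℤ) = 2 := by
    have h2 := hP2 1 (-1) 0 (by norm_num) (by norm_num) (by norm_num) (by norm_num)
    have h1 := hP1 1 (-1) 0 (by norm_num) (by norm_num) (by norm_num) (by norm_num)
    rw [hn0] at h2 h1
    omega
  -- the step relation from pairs (i+1, -1)
  have hstep : ∀ i : ℤ, 0 ≤ i →
      ((n i : ℤ) = (n (i+1) : ℤ) + (n (-1) : ℤ) - 1 ∨
        (n (i+1) : ℤ) * (-1) = (n (-1) : ℤ) * (i+1)) := by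
    intro i hi
    exact hP2 (i+1) (-1) i (by omega) (by omega) (by norm_num) (by omega)
  -- the growth relation from pairs (i, 1)
  have hgrow : ∀ i : ℤ, 2 ≤ i →
      ((n (i+1) : ℤ) = (n i : ℤ) + (n 1 : ℤ) - 1 ∨
        (n i : ℤ) * 1 = (n 1 : ℤ) * i) := by
    intro i hi
    exact hP2 i 1 (i+1) (by omega) (by omega) (by norm_num) (by omega)
  -- case analysis on b = n (-1)
  have hbcases : n (-1) = 0 ∨ n (-1) = 1 ∨ n (-1) = 2 := by omega
  have hdich : (∀ i : ℤ, -1 ≤ i → n i = 1) ∨ (∀ i : ℤ, -1 ≤ i → (n i : ℤ) = i + 1) := by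
    rcases hbcases with hb | hb | hb
    · -- b = 0, a = 2 : second branch
      right
      have ha : (n 1 : ℤ) = 2 := by omega
      -- first n 2 = 3, ruling out n 2 = 0
      have hn2 : (n 2 : ℤ) = 3 := by
        rcases hstep 1 (by norm_num) with h | h
        · rw [show (1:ℤ)+1 = 2 from by norm_num] at h
          omega
        · rw [show (1:ℤ)+1 = 2 from by norm_num] at h
          -- n 2 * (-1) = n(-1) * 2 = 0, so n 2 = 0; derive contradiction
          exfalso
          have h20 : (n 2 : ℤ) = 0 := by rw [hb] at h; omega
          have h3 : (n 3 : ℤ) = 1 := by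
            rcases hgrow 2 (by norm_num) with h' | h'
            · rw [show (2:ℤ)+1 = 3 from by norm_num] at h'; omega
            · exfalso; rw [ha] at h'; omega
          have h4 : (n 4 : ℤ) = 2 := by
            rcases hgrow 3 (by norm_num) with h' | h'
            · rw [show (3:ℤ)+1 = 4 from by norm_num] at h'; omega
            · exfalso; rw [ha] at h'; omega
          have h5 : (n 5 : ℤ) = 3 := by
            rcases hgrow 4 (by norm_num) with h' | h'
            · rw [show (4:ℤ)+1 = 5 from by norm_num] at h'; omega
            · exfalso; rw [ha] at h'; omega
          have h5' : (n 5 : ℤ) = 0 := by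
            rcases hP2 2 3 5 (by norm_num) (by norm_num) (by norm_num) (by norm_num) with h' | h'
            · omega
            · exfalso; omega
          omega
      -- main upward induction
      have hind : ∀ i : ℤ, 1 ≤ i → (n i : ℤ) = i + 1 := by
        refine Int.le_induction ?_ ?_
        · omega
        · intro i hi IH
          by_cases hi1 : i = 1
          · subst hi1
            rw [show (1:ℤ)+1 = 2 from by norm_num]
            omega
          · rcases hgrow i (by omega) with h' | h'
            · omega
            · exfalso; rw [ha] at h'; omega
      intro i hi
      rcases lt_trichotomy i 0 with h1 | h1 | h1
      · have : i = -1 := by omega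
        rw [this]; omega
      · rw [h1]; rw [hn0]; norm_num
      · exact hind i (by omega)
    · -- b = 1, a = 1 : first branch
      left
      have hflat : ∀ i : ℤ, 0 ≤ i → (n i : ℤ) = (n (i+1) : ℤ) := by
        intro i hi
        rcases hstep i hi with h | h
        · omega
        · exfalso; rw [hb] at h; omega
      have hone : ∀ i : ℤ, 0 ≤ i → (n i : ℤ) = 1 := by
        refine Int.le_induction ?_ ?_
        · rw [hn0]; norm_num
        · intro i hi IH
          rw [← hflat i hi]; exact IH
      intro i hi
      rcases lt_trichotomy i 0 with h1 | h1 | h1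
      · have : i = -1 := by omega
        rw [this]; exact hb
      · rw [h1]; exact hn0
      · have := hone i (by omega); omega
    · -- b = 2, a = 0 : impossible
      exfalso
      have ha : (n 1 : ℤ) = 0 := by omega
      rcases hstep 1 (by norm_num) with h | h
      · rw [show (1:ℤ)+1 = 2 from by norm_num] at h; omega
      · rw [show (1:ℤ)+1 = 2 from by norm_num, hb] at h; omega
  refine ⟨n, hord, hdich, ?_⟩
  intro i j hi hj hij
  have hij' : (-1:ℤ) ≤ i + j := by omega
  rcases hdich with hd | hd
  · rw [hd i hi, hd j hj, hd (i+j) hij']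
    norm_num
  · rw [hd i hi, hd j hj, hd (i+j) hij']
    ring
end
end

section
/- For a ∈ ℂ* and c ∈ ℂ, the operators ρ(L_{−1}) = (a+z) (multiplication), ρ(L_0) = (a+z)∂, ρ(L_1) = (a+z)∂² − c(c+1)(a+z)^{−1} on ℂ[[z]] define a representation of sl(2): [ρ(L_0),ρ(L_{−1})] = ρ(L_{−1}), [ρ(L_0),ρ(L_1)] = −ρ(L_1), [ρ(L_1),ρ(L_{−1})] = 2ρ(L_0). -/
set_option synthInstance.maxHeartbeats 1000000
set_option maxHeartbeats 1000000

noncomputable section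

/-- The derivative `∂ = d/dz` on `ℂ[[z]]`, as a `ℂ`-linear endomorphism. -/
def Dp : Module.End ℂ (PowerSeries ℂ) := (PowerSeries.derivative ℂ).toLinearMap

/-- Multiplication by a power series `g`, as a `ℂ`-linear endomorphism of `ℂ[[z]]`. -/
def mp (g : PowerSeries ℂ) : Module.End ℂ (PowerSeries ℂ) := LinearMap.mulLeft ℂ g

lemma mp_mul (g h : PowerSeries ℂ) : mp (g * h) = mp g * mp h := by
  ext f
  simp [mp, mul_assoc]

lemma mp_one : mp (1 : PowerSeries ℂ) = 1 := by
  ext f; simp [mp]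

lemma mp_neg (g : PowerSeries ℂ) : mp (-g) = -mp g := by
  ext f; simp [mp]

lemma D_mp (g : PowerSeries ℂ) :
    Dp * mp g = mp g * Dp + mp (PowerSeries.derivative ℂ g) := by
  ext f
  simp [Dp, mp, mul_comm]

/-- For `a ∈ ℂ*` and `c ∈ ℂ`, the operators `ρ(L₋₁) = (a+z)` (multiplication),
`ρ(L₀) = (a+z)∂`, `ρ(L₁) = (a+z)∂² − c(c+1)(a+z)⁻¹` on `ℂ[[z]]` define a representation of
`sl(2)`: `[ρL₀, ρL₋₁] = ρL₋₁`, `[ρL₀, ρL₁] = −ρL₁`, `[ρL₁, ρL₋₁] = 2ρL₀`. -/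
theorem sl2_rep_on_power_series_S0_case3 (a c : ℂ) (ha : a ≠ 0)
    (ρm1 ρ0 ρ1 : Module.End ℂ (PowerSeries ℂ))
    (hm1 : ρm1 = mp (PowerSeries.C a + PowerSeries.X))
    (h0 : ρ0 = mp (PowerSeries.C a + PowerSeries.X) * Dp)
    (h1 : ρ1 = mp (PowerSeries.C a + PowerSeries.X) * Dp ^ 2 -
      (c * (c + 1)) • mp ((PowerSeries.C a + PowerSeries.X)⁻¹)) :
    ⁅ρ0, ρm1⁆ = ρm1 ∧ ⁅ρ0, ρ1⁆ = -ρ1 ∧ ⁅ρ1, ρm1⁆ = (2 : ℂ) • ρ0 := by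
  set u : PowerSeries ℂ := PowerSeries.C a + PowerSeries.X with hu
  have hcu : PowerSeries.constantCoeff u ≠ 0 := by
    simp [hu, ha]
  have hDu : PowerSeries.derivative ℂ u = 1 := by
    simp [hu]
  set M := mp u
  set V := mp u⁻¹
  have hMV : M * V = 1 := by
    rw [← mp_mul, PowerSeries.mul_inv_cancel u hcu, mp_one]
  have hVM : V * M = 1 := by
    rw [← mp_mul, PowerSeries.inv_mul_cancel u hcu, mp_one]
  have hDM : Dp * M = M * Dp + 1 := by
    rw [D_mp, hDu, mp_one]
  have hDinv : u * PowerSeries.derivative ℂ u⁻¹ = -u⁻¹ := by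
    rw [PowerSeries.derivative_inv', hDu, mul_one]
    have : u * -u⁻¹ ^ 2 = -((u * u⁻¹) * u⁻¹) := by ring
    rw [this, PowerSeries.mul_inv_cancel u hcu, one_mul]
  have hDV : M * (Dp * V) = Dp - V := by
    rw [D_mp, mul_add, ← mul_assoc, hMV, one_mul, ← mp_mul, hDinv, mp_neg]
    rw [sub_eq_add_neg]
  have hD2M : Dp ^ 2 * M = M * Dp ^ 2 + (Dp + Dp) := by
    have h : Dp ^ 2 * M = Dp * (M * Dp + 1) := by rw [← hDM]; noncomm_ring
    rw [h, mul_add, ← mul_assoc, hDM]; noncomm_ring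
  refine ⟨?_, ?_, ?_⟩
  · rw [h0, hm1, Ring.lie_def, mul_assoc, hDM]
    noncomm_ring
  · rw [h0, h1, Ring.lie_def]
    have e1 : (M * Dp) * (M * Dp ^ 2) = M * M * Dp ^ 3 + M * Dp ^ 2 := by
      rw [show (M * Dp) * (M * Dp ^ 2) = M * (Dp * M) * Dp ^ 2 by noncomm_ring, hDM]
      noncomm_ring
    have e2 : (M * Dp ^ 2) * (M * Dp) = M * M * Dp ^ 3 + (M * Dp ^ 2 + M * Dp ^ 2) := by
      rw [show (M * Dp ^ 2) * (M * Dp) = M * (Dp ^ 2 * M) * Dp by noncomm_ring, hD2M]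
      noncomm_ring
    have e3 : (M * Dp) * V = Dp - V := by rw [mul_assoc, hDV]
    have e4 : V * (M * Dp) = Dp := by rw [← mul_assoc, hVM, one_mul]
    rw [mul_sub, sub_mul, mul_smul_comm, smul_mul_assoc, e1, e2, e3, e4, smul_sub]
    abel
  · rw [h1, hm1, Ring.lie_def, h0, two_smul]
    have e1 : (M * Dp ^ 2) * M = M * (M * Dp ^ 2) + (M * Dp + M * Dp) := by
      rw [mul_assoc, hD2M]; noncomm_ring
    rw [sub_mul, mul_sub, smul_mul_assoc, mul_smul_comm, hMV, hVM, e1]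
    abel
end
end
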